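/- Let Q1 and Q2 be probability measures on the real line. Then Q1 ≤_lr Q2 if and only if there exists a nondecreasing measurable function ρ : ℝ → [0,1] which is a density of Q2 with respect to the finite measure Q1 + Q2. -/

import Mathlib

open MeasureTheory Set Filter

noncomputable section

/-- `g` is a (measurable, nonnegative) density of `Q` with respect to `μ`,
i.e. `Q B = ∫_B g dμ` for all Borel sets `B`. -/
def IsDensity (Q μ : Measure ℝ) (g : ℝ → ENNReal) : Prop :=
  Measurable g ∧ ∀ B : Set ℝ, MeasurableSet B → Q B = ∫⁻ x in B, g x ∂μ

/-- Likelihood ratio order `Q1 ≤_lr Q2`: there exist a σ-finite measure `μ` and densities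
`g1 = dQ1/dμ`, `g2 = dQ2/dμ` such that the ratio `g2/g1` (with values in `[0,∞]`)
is nondecreasing on the set `{g1 + g2 > 0}`. -/
def LikelihoodRatioLE (Q1 Q2 : Measure ℝ) : Prop :=
  ∃ (μ : Measure ℝ) (g1 g2 : ℝ → ENNReal), SigmaFinite μ ∧
    IsDensity Q1 μ g1 ∧ IsDensity Q2 μ g2 ∧
    ∀ x y : ℝ, x ≤ y → 0 < g1 x + g2 x → 0 < g1 y + g2 y →
      g2 x / g1 x ≤ g2 y / g1 y

lemma divmul_aux (p q s : ENNReal) : p / q * s = p * s / q := by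
  rw [div_eq_mul_inv, div_eq_mul_inv, mul_right_comm]

lemma cross_aux {p q r s : ENNReal} (hq : q ≠ 0) (hq' : q ≠ ⊤) (hs : s ≠ 0) (hs' : s ≠ ⊤)
    (h : p * s ≤ r * q) : p / q ≤ r / s := by
  rw [ENNReal.le_div_iff_mul_le (Or.inl hs) (Or.inl hs'), divmul_aux,
    ENNReal.div_le_iff hq hq']
  exact h

lemma div_le_one_aux {a b : ENNReal} (h : a ≤ b) : a / b ≤ 1 :=
  ENNReal.div_le_of_le_mul (by simpa using h)

lemma aux1 {a b : ENNReal} (hab : a ≤ b) (hb : b ≤ 1) :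
    a / (1 - a) ≤ b / (1 - b) := by
  rcases eq_or_lt_of_le hb with hb1 | hb1
  · rw [hb1, tsub_self, ENNReal.div_zero one_ne_zero]
    exact le_top
  · have ha1 : a < 1 := lt_of_le_of_lt hab hb1
    have h1a : (1 : ENNReal) - a ≠ 0 := by
      simpa [tsub_eq_zero_iff_le] using not_le.mpr ha1
    have h1b : (1 : ENNReal) - b ≠ 0 := by
      simpa [tsub_eq_zero_iff_le] using not_le.mpr hb1
    have h1at : (1 : ENNReal) - a ≠ ⊤ := (tsub_le_self.trans_lt ENNReal.one_lt_top).ne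
    have h1bt : (1 : ENNReal) - b ≠ ⊤ := (tsub_le_self.trans_lt ENNReal.one_lt_top).ne
    have hat : a ≠ ⊤ := ha1.ne_top
    have hbt : b ≠ ⊤ := hb1.ne_top
    refine cross_aux h1a h1at h1b h1bt ?_
    have key : a * (1 - b) + a * b ≤ b * (1 - a) + a * b := by
      rw [← mul_add, tsub_add_cancel_of_le hb, mul_one]
      calc a = a * 1 := (mul_one a).symm
        _ = a * ((1 - a) + a) := by rw [tsub_add_cancel_of_le ha1.le]
        _ = a * (1 - a) + a * a := by rw [mul_add]
        _ ≤ b * (1 - a) + a * b := add_le_add (by gcongr) (by gcongr)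
    exact (ENNReal.add_le_add_iff_right (ENNReal.mul_ne_top hat hbt)).mp key

lemma aux2 {a b c d : ENNReal} (ha : a ≠ ⊤) (hb : b ≠ ⊤) (hc : c ≠ ⊤) (hd : d ≠ ⊤)
    (hab : 0 < a + b) (hcd : 0 < c + d) (h : b / a ≤ d / c) :
    b / (a + b) ≤ d / (c + d) := by
  rcases eq_or_ne c 0 with rfl | hc0
  · have hd0 : d ≠ 0 := by simpa using hcd.ne'
    rw [zero_add, ENNReal.div_self hd0 hd]
    exact div_le_one_aux le_add_self
  · rcases eq_or_ne a 0 with rfl | ha0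
    · have hb0 : b ≠ 0 := by simpa using hab.ne'
      exfalso
      rw [ENNReal.div_zero hb0] at h
      have htop : d / c = ⊤ := top_le_iff.mp h
      rw [ENNReal.div_eq_top] at htop
      tauto
    · have hbc : b * c ≤ d * a := by
        rw [ENNReal.le_div_iff_mul_le (Or.inl hc0) (Or.inl hc), divmul_aux,
          ENNReal.div_le_iff ha0 ha] at h
        exact h
      refine cross_aux hab.ne' (ENNReal.add_ne_top.mpr ⟨ha, hb⟩) hcd.ne'
        (ENNReal.add_ne_top.mpr ⟨hc, hd⟩) ?_
      calc b * (c + d) = b * c + b * d := mul_add _ _ _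
        _ ≤ d * a + d * b := add_le_add hbc (mul_comm b d).le
        _ = d * (a + b) := (mul_add _ _ _).symm

theorem stmt_3 (Q1 Q2 : Measure ℝ) [IsProbabilityMeasure Q1] [IsProbabilityMeasure Q2] :
    LikelihoodRatioLE Q1 Q2 ↔
    ∃ ρ : ℝ → ENNReal, Monotone ρ ∧ Measurable ρ ∧ (∀ x, ρ x ≤ 1) ∧
      ∀ B : Set ℝ, MeasurableSet B → Q2 B = ∫⁻ x in B, ρ x ∂(Q1 + Q2) := by
  constructor
  · rintro ⟨μ, g1, g2, hσ, ⟨hg1m, hg1⟩, ⟨hg2m, hg2⟩, hmono⟩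
    set S : Set ℝ := {x | 0 < g1 x + g2 x ∧ g1 x ≠ ⊤ ∧ g2 x ≠ ⊤} with hS
    set ρ₀ : ℝ → ENNReal := fun x => g2 x / (g1 x + g2 x) with hρ₀
    set ρ : ℝ → ENNReal := fun x => ⨆ s ∈ S ∩ Iic x, ρ₀ s with hρ
    have hρ0mono : ∀ x ∈ S, ∀ y ∈ S, x ≤ y → ρ₀ x ≤ ρ₀ y := fun x hx y hy hxy =>
      aux2 hx.2.1 hx.2.2 hy.2.1 hy.2.2 hx.1 hy.1 (hmono x y hxy hx.1 hy.1)
    have hmonoρ : Monotone ρ := fun x y hxy =>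
      biSup_mono fun s hs => ⟨hs.1, le_trans hs.2 hxy⟩
    have hρle1 : ∀ x, ρ x ≤ 1 := fun x => iSup₂_le fun s _ => div_le_one_aux le_add_self
    have hρeq : ∀ x ∈ S, ρ x = ρ₀ x := fun x hx =>
      le_antisymm (iSup₂_le fun s hs => hρ0mono s hs.1 x hx hs.2)
        (le_biSup ρ₀ ⟨hx, mem_Iic.mpr le_rfl⟩)
    have hQ1top : ∀ᵐ x ∂μ, g1 x < ⊤ := by
      refine ae_lt_top hg1m ?_
      rw [← setLIntegral_univ, ← hg1 univ MeasurableSet.univ, measure_univ]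
      exact ENNReal.one_ne_top
    have hQ2top : ∀ᵐ x ∂μ, g2 x < ⊤ := by
      refine ae_lt_top hg2m ?_
      rw [← setLIntegral_univ, ← hg2 univ MeasurableSet.univ, measure_univ]
      exact ENNReal.one_ne_top
    have hae : (fun x => ((g1 + g2) x) * ρ x) =ᵐ[μ] g2 := by
      filter_upwards [hQ1top, hQ2top] with x h1 h2
      by_cases hx : 0 < g1 x + g2 x
      · have hxS : x ∈ S := ⟨hx, h1.ne, h2.ne⟩
        have : ρ x = ρ₀ x := hρeq x hxS
        simp only [Pi.add_apply, this, hρ₀]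
        exact ENNReal.mul_div_cancel' (fun h => absurd h hx.ne')
          (fun h => absurd h (ENNReal.add_ne_top.mpr ⟨h1.ne, h2.ne⟩))
      · have hx0 : g1 x + g2 x = 0 := by simpa using hx
        have h20 : g2 x = 0 := (add_eq_zero.mp hx0).2
        have h10 : g1 x = 0 := (add_eq_zero.mp hx0).1
        simp [h10, h20]
    have hsum : Q1 + Q2 = μ.withDensity (g1 + g2) := by
      have e1 : Q1 = μ.withDensity g1 :=
        Measure.ext fun B hB => by rw [hg1 B hB, withDensity_apply _ hB]
      have e2 : Q2 = μ.withDensity g2 :=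
        Measure.ext fun B hB => by rw [hg2 B hB, withDensity_apply _ hB]
      rw [e1, e2, ← withDensity_add_left hg1m]
    refine ⟨ρ, hmonoρ, hmonoρ.measurable, hρle1, fun B hB => ?_⟩
    rw [hg2 B hB, hsum,
      setLIntegral_withDensity_eq_setLIntegral_mul μ (f := g1 + g2) (hg1m.add hg2m) hmonoρ.measurable hB]
    exact (lintegral_congr_ae (ae_restrict_of_ae hae)).symm
  · rintro ⟨ρ, hmono, hmeas, hle1, hQ2⟩
    refine ⟨Q1 + Q2, fun x => 1 - ρ x, ρ, inferInstance,
      ⟨measurable_const.sub hmeas, fun B hB => ?_⟩, ⟨hmeas, hQ2⟩,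
      fun x y hxy _ _ => aux1 (hmono hxy) (hle1 y)⟩
    have hfin : ∫⁻ x in B, ρ x ∂(Q1 + Q2) ≠ ⊤ := by
      rw [← hQ2 B hB]; exact measure_ne_top Q2 B
    rw [lintegral_sub hmeas hfin (ae_of_all _ fun x => hle1 x), setLIntegral_one,
      ← hQ2 B hB, Measure.add_apply, ENNReal.add_sub_cancel_right (measure_ne_top Q2 B)]
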